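/- Let S ⊆ ℝⁿ be compact and φ : S → ℝ ∪ {+∞} lower semicontinuous. Then the convex hull of the epigraph of φ in ℝⁿ × ℝ is closed, and hence equals the epigraph of the convex envelope of φ. -/

import Mathlib

open Set Filter Topology
open scoped RealInnerProductSpace

noncomputable section

abbrev En (n : ℕ) := EuclideanSpace ℝ (Fin n)

/-- The convex envelope of `φ : S → ℝ ∪ {±∞}`: the pointwise supremum of all affine
functions `x ↦ ⟪x, y⟫ + η` majorized by `φ` on `S`. -/
def convEnv {n : ℕ} (S : Set (En n)) (φ : En n → EReal) (x : En n) : EReal :=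
  ⨆ p : {p : En n × ℝ // ∀ z ∈ S, ((⟪z, p.1⟫ + p.2 : ℝ) : EReal) ≤ φ z},
    ((⟪x, p.1.1⟫ + p.1.2 : ℝ) : EReal)

lemma sum_extend_fin {ι : Type*} [Fintype ι] {m : ℕ} (e : ι ↪ Fin m) {M : Type*}
    [AddCommMonoid M] (f : ι → M) (g : Fin m → M) (hg : ∀ j, (¬ ∃ i, e i = j) → g j = 0)
    (hfg : ∀ i, g (e i) = f i) : ∑ j, g j = ∑ i, f i := by
  classical
  calc ∑ j : Fin m, g j = ∑ j ∈ Finset.univ.map e, g j := by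
        refine (Finset.sum_subset (Finset.subset_univ _) ?_).symm
        intro j _ hj
        exact hg j (by simpa [Finset.mem_map] using hj)
    _ = ∑ i, g (e i) := Finset.sum_map _ e g
    _ = ∑ i, f i := Finset.sum_congr rfl fun i _ => hfg i

lemma mem_convexHull_fin {E : Type*} [NormedAddCommGroup E] [NormedSpace ℝ E]
    [FiniteDimensional ℝ E] {s : Set E} {x : E} (hx : x ∈ convexHull ℝ s) :
    ∃ (w : Fin (Module.finrank ℝ E + 1) → ℝ) (z : Fin (Module.finrank ℝ E + 1) → E),
      (∀ i, 0 ≤ w i) ∧ ∑ i, w i = 1 ∧ (∀ i, z i ∈ s) ∧ ∑ i, w i • z i = x := by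
  classical
  obtain ⟨ι, hfin, z, w, hzs, hai, hw0, hw1, hsum⟩ :=
    eq_pos_convex_span_of_mem_convexHull hx
  set m := Module.finrank ℝ E + 1 with hm
  have hcard : Fintype.card ι ≤ m := by
    refine hai.card_le_finrank_succ.trans ?_
    have := Submodule.finrank_le (vectorSpan ℝ (Set.range z))
    omega
  have hne : Nonempty ι := by
    by_contra h
    rw [not_nonempty_iff] at h
    simp [Finset.univ_eq_empty] at hw1
  obtain ⟨i₀⟩ := hne
  obtain ⟨e⟩ : Nonempty (ι ↪ Fin m) := by
    rw [Function.Embedding.nonempty_iff_card_le]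
    simpa using hcard
  have hoff : ∀ j, (¬ ∃ i, e i = j) → Function.extend e w 0 j = 0 := fun j h => by
    rw [Function.extend_apply' _ _ _ h]; rfl
  refine ⟨Function.extend e w 0, Function.extend e z (fun _ => z i₀), ?_, ?_, ?_, ?_⟩
  · intro j
    by_cases h : ∃ i, e i = j
    · obtain ⟨i, rfl⟩ := h
      rw [e.injective.extend_apply]
      exact (hw0 i).le
    · rw [hoff j h]
  · rw [← hw1]
    exact sum_extend_fin e w _ hoff (fun i => e.injective.extend_apply _ _ _)
  · intro j
    by_cases h : ∃ i, e i = j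
    · obtain ⟨i, rfl⟩ := h
      rw [e.injective.extend_apply]
      exact hzs ⟨i, rfl⟩
    · rw [Function.extend_apply' _ _ _ h]
      exact hzs ⟨i₀, rfl⟩
  · rw [← hsum]
    refine sum_extend_fin e (fun i => w i • z i) _ (fun j h => by rw [hoff j h, zero_smul]) ?_
    intro i
    rw [e.injective.extend_apply, e.injective.extend_apply]

lemma lsc_bddBelow {X : Type*} [TopologicalSpace X] {S : Set X} (hS : IsCompact S)
    {φ : X → EReal} (hlsc : LowerSemicontinuousOn φ S) (hbot : ∀ x ∈ S, φ x ≠ ⊥) :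
    ∃ c : ℝ, ∀ x ∈ S, (c : EReal) ≤ φ x := by
  refine hS.induction_on ⟨0, by simp⟩ ?_ ?_ ?_
  · rintro s t hst ⟨c, hc⟩
    exact ⟨c, fun x hx => hc x (hst hx)⟩
  · rintro s t ⟨c, hc⟩ ⟨d, hd⟩
    refine ⟨min c d, fun x hx => ?_⟩
    rcases hx with hx | hx
    · exact le_trans (by exact_mod_cast min_le_left c d) (hc x hx)
    · exact le_trans (by exact_mod_cast min_le_right c d) (hd x hx)
  · intro x hx
    obtain ⟨r, hr1, hr2⟩ := EReal.lt_iff_exists_real_btwn.mp (bot_lt_iff_ne_bot.mpr (hbot x hx))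
    refine ⟨{z | (r : EReal) < φ z}, hlsc x hx r hr2, r, fun z hz => le_of_lt hz⟩

lemma convEnv_le_coe_iff {n : ℕ} (S : Set (En n)) (φ : En n → EReal) (x : En n) (ξ : ℝ) :
    convEnv S φ x ≤ (ξ : EReal) ↔
      ∀ y : En n, ∀ η : ℝ, (∀ z ∈ S, ((⟪z, y⟫ + η : ℝ) : EReal) ≤ φ z) → ⟪x, y⟫ + η ≤ ξ := by
  rw [convEnv, iSup_le_iff]
  constructor
  · intro h y η hm
    exact_mod_cast h ⟨(y, η), hm⟩
  · rintro h ⟨⟨y, η⟩, hm⟩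
    exact_mod_cast h y η hm

lemma hull_subset_env {n : ℕ} (S : Set (En n)) (φ : En n → EReal) :
    convexHull ℝ {p : En n × ℝ | p.1 ∈ S ∧ φ p.1 ≤ (p.2 : EReal)} ⊆
      {p : En n × ℝ | convEnv S φ p.1 ≤ (p.2 : EReal)} := by
  refine convexHull_min ?_ ?_
  · rintro ⟨z, ζ⟩ ⟨hzS, hφ⟩
    rw [Set.mem_setOf_eq, convEnv, iSup_le_iff]
    rintro ⟨⟨y, η⟩, hm⟩
    exact le_trans (hm z hzS) hφ
  · intro p hp q hq a b ha hb hab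
    rw [Set.mem_setOf_eq, convEnv_le_coe_iff] at *
    intro y η hm
    have h1 := hp y η hm
    have h2 := hq y η hm
    have hip : ⟪(a • p + b • q : En n × ℝ).1, y⟫ = a * ⟪p.1, y⟫ + b * ⟪q.1, y⟫ := by
      simp [inner_add_left, real_inner_smul_left, Finset.mul_sum, mul_assoc]
    have hseci : (a • p + b • q : En n × ℝ).2 = a * p.2 + b * q.2 := rfl
    rw [hip, hseci]
    have h1' : a * ⟪p.1, y⟫ + a * η ≤ a * p.2 := by nlinarith
    have h2' : b * ⟪q.1, y⟫ + b * η ≤ b * q.2 := by nlinarith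
    have hη : a * η + b * η = η := by linear_combination η * hab
    linarith

lemma env_subset_hull {n : ℕ} (S : Set (En n)) (hS : IsCompact S)
    (φ : En n → EReal) (hlsc : LowerSemicontinuousOn φ S)
    (hbot : ∀ x ∈ S, φ x ≠ ⊥)
    (hcl : IsClosed (convexHull ℝ {p : En n × ℝ | p.1 ∈ S ∧ φ p.1 ≤ (p.2 : EReal)})) :
    {p : En n × ℝ | convEnv S φ p.1 ≤ (p.2 : EReal)} ⊆
      convexHull ℝ {p : En n × ℝ | p.1 ∈ S ∧ φ p.1 ≤ (p.2 : EReal)} := by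
  classical
  set Epi := {p : En n × ℝ | p.1 ∈ S ∧ φ p.1 ≤ (p.2 : EReal)} with hEpi
  intro p hp
  rw [Set.mem_setOf_eq, convEnv_le_coe_iff] at hp
  by_contra hp'
  by_cases htop : ∀ z ∈ S, φ z = ⊤
  · have h := hp 0 (p.2 + 1) (fun z hz => by rw [htop z hz]; exact le_top)
    simp [inner_zero_right] at h
    linarith
  · push_neg at htop
    obtain ⟨z₀, hz₀S, hz₀⟩ := htop
    obtain ⟨c, hc⟩ := lsc_bddBelow hS hlsc hbot
    obtain ⟨f, u, hfu, hup⟩ := geometric_hahn_banach_closed_point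
      (convex_convexHull ℝ Epi) hcl hp'
    set y : En n := (InnerProductSpace.toDual ℝ (En n)).symm
      (f.comp (ContinuousLinearMap.inl ℝ (En n) ℝ)) with hy
    set s : ℝ := f ((0 : En n), (1 : ℝ)) with hs
    have hf : ∀ (x : En n) (ξ : ℝ), f (x, ξ) = ⟪x, y⟫ + ξ * s := by
      intro x ξ
      have h1 : (x, ξ) = ((x, (0:ℝ)) + ξ • ((0 : En n), (1:ℝ))) := by
        simp [Prod.ext_iff]
      rw [h1, map_add, map_smul]
      have h2 : ⟪y, x⟫ = (f.comp (ContinuousLinearMap.inl ℝ (En n) ℝ)) x :=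
        InnerProductSpace.toDual_symm_apply
      simp only [ContinuousLinearMap.comp_apply, ContinuousLinearMap.inl_apply] at h2
      rw [smul_eq_mul, real_inner_comm, ← h2]
    have hEmem : ∀ z ∈ S, ∀ r : ℝ, φ z ≤ (r : EReal) → ⟪z, y⟫ + r * s < u := by
      intro z hz r hr
      have hmem : (z, r) ∈ Epi := ⟨hz, hr⟩
      have := hfu _ (subset_convexHull ℝ Epi hmem)
      rwa [hf] at this
    have hfin : ∀ z ∈ S, φ z ≠ ⊤ → φ z ≤ ((φ z).toReal : EReal) := by
      intro z hz hne
      rw [EReal.coe_toReal hne (hbot z hz)]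
    obtain ⟨r₀, hr₀⟩ : ∃ r₀ : ℝ, φ z₀ ≤ (r₀ : EReal) := ⟨(φ z₀).toReal, hfin z₀ hz₀S hz₀⟩
    rw [hf p.1 p.2] at hup
    have hs0 : s ≤ 0 := by
      by_contra hs'
      push_neg at hs'
      have ht1 : (u - ⟪z₀, y⟫ - r₀ * s) / s + 1 ≤ max 0 ((u - ⟪z₀, y⟫ - r₀ * s) / s + 1) :=
        le_max_right _ _
      set t : ℝ := max 0 ((u - ⟪z₀, y⟫ - r₀ * s) / s + 1)
      have ht0 : 0 ≤ t := le_max_left _ _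
      have hmem : φ z₀ ≤ ((r₀ + t : ℝ) : EReal) := hr₀.trans (by exact_mod_cast by linarith)
      have hlt := hEmem z₀ hz₀S (r₀ + t) hmem
      have h2 : (u - ⟪z₀, y⟫ - r₀ * s) < t * s := by
        calc u - ⟪z₀, y⟫ - r₀ * s = ((u - ⟪z₀, y⟫ - r₀ * s) / s) * s := by field_simp
        _ < t * s := mul_lt_mul_of_pos_right (by linarith) hs'
      nlinarith
    rcases lt_or_eq_of_le hs0 with hslt | hseq
    · -- s < 0
      have hsne : s ≠ 0 := ne_of_lt hslt
      have hlpos : (0:ℝ) < -s⁻¹ := by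
        have : s⁻¹ < 0 := inv_lt_zero.mpr hslt
        linarith
      have hls : (-s⁻¹) * s = -1 := by
        rw [neg_mul, inv_mul_cancel₀ hsne]
      have hmin : ∀ z ∈ S, ((⟪z, (-s⁻¹) • y⟫ + (-(-s⁻¹ * u)) : ℝ) : EReal) ≤ φ z := by
        intro z hz
        by_cases hzt : φ z = ⊤
        · rw [hzt]; exact le_top
        · have hr := hfin z hz hzt
          have hlt := hEmem z hz _ hr
          have h6 : ⟪z, (-s⁻¹) • y⟫ + (-(-s⁻¹ * u)) < (φ z).toReal := by
            rw [real_inner_smul_right]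
            have h8 := mul_lt_mul_of_pos_left hlt hlpos
            have h9 : (-s⁻¹) * ((φ z).toReal * s) = -(φ z).toReal := by
              rw [mul_comm ((φ z).toReal) s, ← mul_assoc, hls]; ring
            nlinarith [h8, h9]
          have heq : (((φ z).toReal : ℝ) : EReal) = φ z := EReal.coe_toReal hzt (hbot z hz)
          rw [← heq]
          exact_mod_cast h6.le
      have h4 := hp _ _ hmin
      rw [real_inner_smul_right] at h4
      have h10 := mul_lt_mul_of_pos_left hup hlpos
      have h11 : (-s⁻¹) * (p.2 * s) = -p.2 := by
        rw [mul_comm p.2 s, ← mul_assoc, hls]; ring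
      nlinarith [h4, h10, h11]
    · -- s = 0
      rw [hseq] at hup
      have hup' : u < ⟪p.1, y⟫ := by linarith
      have hδpos : (0:ℝ) < ⟪p.1, y⟫ - u := by linarith
      have ht1 : (p.2 - c) / (⟪p.1, y⟫ - u) + 1 ≤
          max 0 ((p.2 - c) / (⟪p.1, y⟫ - u) + 1) := le_max_right _ _
      set t : ℝ := max 0 ((p.2 - c) / (⟪p.1, y⟫ - u) + 1)
      have ht0 : (0:ℝ) ≤ t := le_max_left _ _
      have hmin : ∀ z ∈ S, ((⟪z, t • y⟫ + (c - t * u) : ℝ) : EReal) ≤ φ z := by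
        intro z hz
        by_cases hzt : φ z = ⊤
        · rw [hzt]; exact le_top
        · have hlt := hEmem z hz _ (hfin z hz hzt)
          rw [hseq, mul_zero, add_zero] at hlt
          have h6 : ⟪z, t • y⟫ + (c - t * u) ≤ c := by
            rw [real_inner_smul_right]
            nlinarith [mul_le_mul_of_nonneg_left hlt.le ht0]
          exact le_trans (by exact_mod_cast h6) (hc z hz)
      have h4 := hp _ _ hmin
      rw [real_inner_smul_right] at h4
      have h6 := mul_le_mul_of_nonneg_right ht1 hδpos.le
      have h7 : (p.2 - c) / (⟪p.1, y⟫ - u) * (⟪p.1, y⟫ - u) = p.2 - c :=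
        div_mul_cancel₀ _ (ne_of_gt hδpos)
      nlinarith [h4, h6, h7, hδpos]

lemma hull_closed {n : ℕ} (S : Set (En n)) (hS : IsCompact S)
    (φ : En n → EReal) (hlsc : LowerSemicontinuousOn φ S)
    (hbot : ∀ x ∈ S, φ x ≠ ⊥) :
    IsClosed (convexHull ℝ {p : En n × ℝ | p.1 ∈ S ∧ φ p.1 ≤ (p.2 : EReal)}) := by
  classical
  set Epi := {p : En n × ℝ | p.1 ∈ S ∧ φ p.1 ≤ (p.2 : EReal)} with hEpi
  obtain ⟨c, hc⟩ := lsc_bddBelow hS hlsc hbot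
  refine IsSeqClosed.isClosed ?_
  intro u p hu hup
  set m := Module.finrank ℝ (En n × ℝ) + 1 with hm
  choose w z hw0 hw1 hzE hsum using fun k => mem_convexHull_fin (hu k)
  set xs : ℕ → Fin m → En n := fun k i => (z k i).1 with hxs
  set ξs : ℕ → Fin m → ℝ := fun k i => (z k i).2 with hξs
  set μs : ℕ → Fin m → ℝ := fun k i => w k i * ξs k i with hμs
  have hxS : ∀ k i, xs k i ∈ S := fun k i => (hzE k i).1
  have hφξ : ∀ k i, φ (xs k i) ≤ ((ξs k i : ℝ) : EReal) := fun k i => (hzE k i).2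
  have hcξ : ∀ k i, c ≤ ξs k i := by
    intro k i
    exact_mod_cast (hc _ (hxS k i)).trans (hφξ k i)
  have hw01 : ∀ k i, w k i ≤ 1 := by
    intro k i
    rw [← hw1 k]
    exact Finset.single_le_sum (fun j _ => hw0 k j) (Finset.mem_univ i)
  -- second coordinates of the sums
  have hsumfst : ∀ k, ∑ i, w k i • xs k i = (u k).1 := by
    intro k
    rw [← hsum k, Prod.fst_sum]
    rfl
  have hsumμ : ∀ k, ∑ i, μs k i = (u k).2 := by
    intro k
    rw [← hsum k, Prod.snd_sum]
    rfl
  -- bound on (u k).2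
  have h2t : Filter.Tendsto (fun k => (u k).2) atTop (𝓝 p.2) :=
    (continuous_snd.tendsto p).comp hup
  obtain ⟨B, hB⟩ := h2t.bddAbove_range
  have hB' : ∀ k, (u k).2 ≤ B := fun k => hB (Set.mem_range_self k)
  set lo : ℝ := min c 0 with hlo
  have hlo0 : lo ≤ 0 := min_le_right _ _
  have hloc : lo ≤ c := min_le_left _ _
  have hwc : ∀ k i, lo ≤ w k i * c := by
    intro k i
    rcases le_or_gt c 0 with h | h
    · nlinarith [hw0 k i, hw01 k i]
    · nlinarith [hw0 k i]
  have hμlo : ∀ k i, lo ≤ μs k i := by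
    intro k i
    exact (hwc k i).trans (mul_le_mul_of_nonneg_left (hcξ k i) (hw0 k i))
  set hi : ℝ := B - (m : ℝ) * lo with hhi
  have hμhi : ∀ k i, μs k i ≤ hi := by
    intro k i
    have hsplit : μs k i + ∑ j ∈ Finset.univ.erase i, μs k j = (u k).2 := by
      rw [← hsumμ k]
      exact Finset.add_sum_erase _ _ (Finset.mem_univ i)
    have hcard : ((Finset.univ.erase i).card : ℝ) * lo ≤ ∑ j ∈ Finset.univ.erase i, μs k j := by
      have := Finset.card_nsmul_le_sum (Finset.univ.erase i) (μs k) lo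
        (fun j _ => hμlo k j)
      rwa [nsmul_eq_mul] at this
    have hcard2 : ((m : ℝ)) * lo ≤ ((Finset.univ.erase i).card : ℝ) * lo := by
      have h1 : ((Finset.univ.erase i).card : ℝ) ≤ (m : ℝ) := by
        have := Finset.card_erase_le (a := i) (s := (Finset.univ : Finset (Fin m)))
        have h2 : (Finset.univ : Finset (Fin m)).card = m := by simp
        exact_mod_cast this.trans_eq h2
      exact mul_le_mul_of_nonpos_right h1 hlo0
    have := hB' k
    rw [hhi]
    linarith
  -- the compact container
  set T : Set ((Fin m → ℝ) × (Fin m → En n) × (Fin m → ℝ)) :=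
    (Set.Icc 0 1) ×ˢ ((Set.pi Set.univ fun _ => S) ×ˢ
      (Set.Icc (fun _ => lo) (fun _ => hi))) with hT
  have hTc : IsCompact T := isCompact_Icc.prod ((isCompact_univ_pi fun _ => hS).prod
    isCompact_Icc)
  set F : ℕ → (Fin m → ℝ) × (Fin m → En n) × (Fin m → ℝ) := fun k => (w k, xs k, μs k)
    with hF
  have hFT : ∀ k, F k ∈ T := by
    intro k
    refine ⟨⟨?_, ?_⟩, fun i _ => hxS k i, ⟨?_, ?_⟩⟩
    · intro i; exact hw0 k i
    · intro i; exact hw01 k i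
    · intro i; exact hμlo k i
    · intro i; exact hμhi k i
  obtain ⟨a, haT, σ, hσ, hconv⟩ := hTc.tendsto_subseq hFT
  obtain ⟨W, X, M⟩ := a
  -- componentwise convergence
  have hWt : Tendsto (fun k => w (σ k)) atTop (𝓝 W) :=
    (continuous_fst.tendsto _).comp hconv
  have hXt : Tendsto (fun k => xs (σ k)) atTop (𝓝 X) :=
    ((continuous_fst.comp continuous_snd).tendsto _).comp hconv
  have hMt : Tendsto (fun k => μs (σ k)) atTop (𝓝 M) :=
    ((continuous_snd.comp continuous_snd).tendsto _).comp hconv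
  have hWti : ∀ i, Tendsto (fun k => w (σ k) i) atTop (𝓝 (W i)) :=
    fun i => tendsto_pi_nhds.mp hWt i
  have hXti : ∀ i, Tendsto (fun k => xs (σ k) i) atTop (𝓝 (X i)) :=
    fun i => tendsto_pi_nhds.mp hXt i
  have hMti : ∀ i, Tendsto (fun k => μs (σ k) i) atTop (𝓝 (M i)) :=
    fun i => tendsto_pi_nhds.mp hMt i
  -- membership of the limit
  have hW0 : ∀ i, 0 ≤ W i := fun i => haT.1.1 i
  have hXS : ∀ i, X i ∈ S := fun i => haT.2.1 i (Set.mem_univ i)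
  -- limit of the subsequence of u
  have hupσ : Tendsto (u ∘ σ) atTop (𝓝 p) := hup.comp hσ.tendsto_atTop
  have hup1 : Tendsto (fun k => (u (σ k)).1) atTop (𝓝 p.1) :=
    (continuous_fst.tendsto p).comp hupσ
  have hup2 : Tendsto (fun k => (u (σ k)).2) atTop (𝓝 p.2) :=
    (continuous_snd.tendsto p).comp hupσ
  -- sum of weights
  have hW1 : ∑ i, W i = 1 := by
    have ht : Tendsto (fun k => ∑ i, w (σ k) i) atTop (𝓝 (∑ i, W i)) :=
      tendsto_finset_sum _ (fun i _ => hWti i)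
    have ht2 : Tendsto (fun k => ∑ i, w (σ k) i) atTop (𝓝 1) := by
      have : (fun k => ∑ i, w (σ k) i) = fun _ => (1:ℝ) := funext fun k => hw1 (σ k)
      rw [this]
      exact tendsto_const_nhds
    exact tendsto_nhds_unique ht ht2
  -- first coordinate
  have hfst : ∑ i, W i • X i = p.1 := by
    have ht : Tendsto (fun k => ∑ i, w (σ k) i • xs (σ k) i) atTop (𝓝 (∑ i, W i • X i)) :=
      tendsto_finset_sum _ (fun i _ => (hWti i).smul (hXti i))
    have ht2 : Tendsto (fun k => ∑ i, w (σ k) i • xs (σ k) i) atTop (𝓝 p.1) := by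
      have : (fun k => ∑ i, w (σ k) i • xs (σ k) i) = fun k => (u (σ k)).1 :=
        funext fun k => hsumfst (σ k)
      rw [this]
      exact hup1
    exact tendsto_nhds_unique ht ht2
  -- second coordinate
  have hsnd : ∑ i, M i = p.2 := by
    have ht : Tendsto (fun k => ∑ i, μs (σ k) i) atTop (𝓝 (∑ i, M i)) :=
      tendsto_finset_sum _ (fun i _ => hMti i)
    have ht2 : Tendsto (fun k => ∑ i, μs (σ k) i) atTop (𝓝 p.2) := by
      have : (fun k => ∑ i, μs (σ k) i) = fun k => (u (σ k)).2 :=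
        funext fun k => hsumμ (σ k)
      rw [this]
      exact hup2
    exact tendsto_nhds_unique ht ht2
  -- nonnegativity of M on zero weights
  have hMc : ∀ i, W i * c ≤ M i := by
    intro i
    refine le_of_tendsto_of_tendsto' ((hWti i).mul_const c) (hMti i) (fun k => ?_)
    exact mul_le_mul_of_nonneg_left (hcξ (σ k) i) (hw0 (σ k) i)
  -- semicontinuity step
  have hφle : ∀ i, W i ≠ 0 → φ (X i) ≤ ((M i / W i : ℝ) : EReal) := by
    intro i hne
    have hWpos : 0 < W i := lt_of_le_of_ne (hW0 i) (Ne.symm hne)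
    have hratio : Tendsto (fun k => μs (σ k) i / w (σ k) i) atTop (𝓝 (M i / W i)) :=
      (hMti i).div (hWti i) hne
    by_contra hcon
    push_neg at hcon
    obtain ⟨r, hr1, hr2⟩ := EReal.lt_iff_exists_real_btwn.mp hcon
    have hXwithin : Tendsto (fun k => xs (σ k) i) atTop (𝓝[S] (X i)) :=
      tendsto_nhdsWithin_of_tendsto_nhds_of_eventually_within _ (hXti i)
        (Eventually.of_forall (fun k => hxS _ i))
    have hev : ∀ᶠ k in atTop, (r : EReal) < φ (xs (σ k) i) :=
      hXwithin.eventually (hlsc (X i) (hXS i) r hr2)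
    have hevw : ∀ᶠ k in atTop, 0 < w (σ k) i :=
      (hWti i).eventually (eventually_gt_nhds hWpos)
    have hev2 : ∀ᶠ k in atTop, r ≤ μs (σ k) i / w (σ k) i := by
      filter_upwards [hev, hevw] with k h1 h2
      have hrξ : r < ξs (σ k) i := by
        have := h1.trans_le (hφξ (σ k) i)
        exact_mod_cast this
      have : μs (σ k) i / w (σ k) i = ξs (σ k) i := by
        rw [hμs]
        exact mul_div_cancel_left₀ _ (ne_of_gt h2)
      rw [this]
      exact hrξ.le
    have := ge_of_tendsto hratio hev2
    have hr1' : M i / W i < r := by exact_mod_cast hr1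
    linarith
  -- assemble
  set P : Finset (Fin m) := Finset.univ.filter (fun i => W i ≠ 0) with hP
  have hWP : ∑ i ∈ P, W i = 1 := by
    rw [hP, Finset.sum_filter_ne_zero, hW1]
  have hsplit := Finset.sum_filter_add_sum_filter_not Finset.univ (fun i => W i ≠ 0) M
  set D : ℝ := ∑ i ∈ Finset.univ.filter (fun i => ¬ W i ≠ 0), M i with hD
  have hD0 : 0 ≤ D := by
    refine Finset.sum_nonneg (fun i hi => ?_)
    rw [Finset.mem_filter] at hi
    have hWi : W i = 0 := not_not.mp hi.2
    have := hMc i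
    rw [hWi, zero_mul] at this
    exact this
  set Z : Fin m → En n × ℝ := fun i => (X i, M i / W i + D) with hZ
  have hZE : ∀ i ∈ P, Z i ∈ Epi := by
    intro i hi
    rw [Finset.mem_filter] at hi
    refine ⟨hXS i, ?_⟩
    refine (hφle i hi.2).trans ?_
    exact_mod_cast by linarith [hD0]
  have hkey : ∑ i ∈ P, W i • Z i = p := by
    refine Prod.ext ?_ ?_
    · rw [Prod.fst_sum]
      simp only [Prod.smul_fst]
      rw [← hfst]
      refine Finset.sum_subset (Finset.subset_univ _) ?_
      intro i _ hi
      rw [hP, Finset.mem_filter] at hi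
      push_neg at hi
      rw [hi (Finset.mem_univ i), zero_smul]
    · rw [Prod.snd_sum]
      simp only [Prod.smul_snd, smul_eq_mul]
      have hterm : ∀ i ∈ P, W i * (M i / W i + D) = M i + W i * D := by
        intro i hi
        rw [Finset.mem_filter] at hi
        field_simp [hi.2]
      rw [Finset.sum_congr rfl hterm, Finset.sum_add_distrib, ← Finset.sum_mul, hWP,
        one_mul, ← hsnd, ← hsplit]
  have hmem := P.centerMass_mem_convexHull
    (w := W) (z := Z)
    (fun i _ => hW0 i)
    (by rw [hWP]; norm_num)
    (fun i hi => hZE i hi)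
  rwa [Finset.centerMass_eq_of_sum_1 _ _ hWP, hkey] at hmem


theorem stmt2 {n : ℕ} (S : Set (En n)) (hS : IsCompact S)
    (φ : En n → EReal) (hlsc : LowerSemicontinuousOn φ S)
    (hbot : ∀ x ∈ S, φ x ≠ ⊥) :
    IsClosed (convexHull ℝ {p : En n × ℝ | p.1 ∈ S ∧ φ p.1 ≤ (p.2 : EReal)}) ∧
    convexHull ℝ {p : En n × ℝ | p.1 ∈ S ∧ φ p.1 ≤ (p.2 : EReal)} =
      {p : En n × ℝ | convEnv S φ p.1 ≤ (p.2 : EReal)} := by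
  have hcl := hull_closed S hS φ hlsc hbot
  exact ⟨hcl, subset_antisymm (hull_subset_env S φ) (env_subset_hull S hS φ hlsc hbot hcl)⟩
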